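/- arXiv:2603.27925 — 2 statements merged into one kernel-verified Lean document; each statement's English description precedes it below -/
import Mathlib

section
/- In U⁺ one has E_{2δ} = ⟦E_{α₀}, E_{δ+α₁}⟧ = ⟦E_{δ+α₀}, E_{α₁}⟧. -/
noncomputable section
open scoped TensorProduct
namespace TwoParamQA

/-- The entries of the parameter matrix `Q`. -/
def qm (q a : ℂ) (i j : Fin 2) : ℂ :=
  if i = j then q ^ 2 else if i = 0 then a else q ^ (-4 : ℤ) * a⁻¹

/-- The bicharacter `χ` on `ℤΠ = ℤα₀ ⊕ ℤα₁` with `χ(αᵢ,αⱼ) = q_{ij}`. -/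
def chi (q a : ℂ) (l m : ℤ × ℤ) : ℂ :=
  q ^ (2 * l.1 * m.1) * a ^ (l.1 * m.2) * (q ^ (-4 : ℤ) * a⁻¹) ^ (l.2 * m.1) *
    q ^ (2 * l.2 * m.2)

/-- The `q`-Serre element `X_i³X_j − c_{ij}(3)_{q²} X_i²X_jX_i + q²c_{ij}²(3)_{q²} X_iX_jX_i²
    − q⁶c_{ij}³ X_jX_i³` (with `q_{ii} = q²`). -/
def serreElt (q : ℂ) {A : Type} [Ring A] [Algebra ℂ A] (X : Fin 2 → A)
    (c : Fin 2 → Fin 2 → ℂ) (i j : Fin 2) : A :=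
  X i ^ 3 * X j - (c i j * (1 + q ^ 2 + q ^ 4)) • (X i ^ 2 * X j * X i)
    + (q ^ 2 * c i j ^ 2 * (1 + q ^ 2 + q ^ 4)) • (X i * X j * X i ^ 2)
    - (q ^ 6 * c i j ^ 3) • (X j * X i ^ 3)

/-- Defining relations of the positive part `U⁺`: the two `q`-Serre relations. -/
inductive PRel (q a : ℂ) : FreeAlgebra ℂ (Fin 2) → FreeAlgebra ℂ (Fin 2) → Prop
  | serre (i j : Fin 2) (h : i ≠ j) :
      PRel q a (serreElt q (FreeAlgebra.ι ℂ) (qm q a) i j) 0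

/-- The positive part `U⁺` of `U_{q,Q}(\hat{sl₂})`, presented by `E₀, E₁` and the Serre
relations. -/
abbrev Up (q a : ℂ) := RingQuot (PRel q a)

/-- The generators `E₀, E₁` of `U⁺`. -/
def Ee (q a : ℂ) (i : Fin 2) : Up q a :=
  RingQuot.mkAlgHom ℂ (PRel q a) (FreeAlgebra.ι ℂ i)

variable {A : Type} [Ring A] [Algebra ℂ A]

/-- Graded bracket `⟦X,Y⟧ = XY − χ(λ,μ)YX` for `X` of degree `l` and `Y` of degree `m`. -/
def gbr (χ : ℤ × ℤ → ℤ × ℤ → ℂ) (l m : ℤ × ℤ) (X Y : A) : A :=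
  X * Y - χ l m • (Y * X)

/-- `(n)_x = 1 + x + ⋯ + x^{n-1}`. -/
def qnum (x : ℂ) (n : ℕ) : ℂ := ∑ m ∈ Finset.range n, x ^ m

/-- `[n]_q = q^{-(n-1)}(n)_{q²}`. -/
def qint (q : ℂ) (n : ℕ) : ℂ := q ^ (1 - (n : ℤ)) * qnum (q ^ 2) n

/-- `(n)_x! = (1)_x (2)_x ⋯ (n)_x`. -/
def qfact (x : ℂ) (n : ℕ) : ℂ := ∏ k ∈ Finset.range n, qnum x (k + 1)

/-- Real root vectors `E_{nδ+α₁}` (generic version, for generators `e₀, e₁` and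
bicharacter `χ`); `E_{nδ+α₁}` has degree `nδ+α₁ = (n, n+1)`. -/
def ged1 (q : ℂ) (χ : ℤ × ℤ → ℤ × ℤ → ℂ) (e0 e1 : A) : ℕ → A
  | 0 => e1
  | n + 1 => (qint q 2)⁻¹ •
      gbr χ (1, 1) ((n : ℤ), (n : ℤ) + 1) (gbr χ (1, 0) (0, 1) e0 e1)
        (ged1 q χ e0 e1 n)

/-- Imaginary root vectors `E_{nδ}` (with the convention `E_{0δ} = 1`, unused). -/
def gedl (q : ℂ) (χ : ℤ × ℤ → ℤ × ℤ → ℂ) (e0 e1 : A) : ℕ → A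
  | 0 => 1
  | n + 1 => gbr χ (1, 0) ((n : ℤ), (n : ℤ) + 1) e0 (ged1 q χ e0 e1 n)

/-- Real root vectors `E_{nδ+α₀}`, of degree `(n+1, n)`. -/
def ged0 (q : ℂ) (χ : ℤ × ℤ → ℤ × ℤ → ℂ) (e0 e1 : A) : ℕ → A
  | 0 => e0
  | n + 1 => (qint q 2)⁻¹ •
      gbr χ ((n : ℤ) + 1, (n : ℤ)) (1, 1) (ged0 q χ e0 e1 n)
        (gbr χ (1, 0) (0, 1) e0 e1)

/-- `et` is the family of modified imaginary root vectors `Ẽ_{kδ}` for the imaginary root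
vectors `edl`, i.e. it satisfies the defining recursion
`c^{−(k−1)}·k·E_{kδ} = k·Ẽ_{kδ} + (q−q⁻¹)·Σ_{r=1}^{k−1} r·c^{−(k−r−1)}·Ẽ_{rδ}E_{(k−r)δ}`
(with `c = q²a`), which is equivalent to
`1 + (q−q⁻¹)Σ_{k≥1} c^{−(k−1)}E_{kδ}z^k = exp((q−q⁻¹)Σ_{k≥1}Ẽ_{kδ}z^k)`. -/
def IsTilde (q c : ℂ) (edl et : ℕ → A) : Prop :=
  ∀ k : ℕ, c ^ (-(k : ℤ)) • (((k : ℂ) + 1) • edl (k + 1)) =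
    ((k : ℂ) + 1) • et (k + 1) +
      (q - q⁻¹) • ∑ r ∈ Finset.range k,
        (((r : ℂ) + 1) * c ^ (-((k : ℤ) - 1 - (r : ℤ)))) • (et (r + 1) * edl (k - r))

/-- `E_{nδ+α₁}` in `U⁺`. -/
def E1v (q a : ℂ) : ℕ → Up q a := ged1 q (chi q a) (Ee q a 0) (Ee q a 1)

/-- `E_{nδ}` in `U⁺`. -/
def Edlv (q a : ℂ) : ℕ → Up q a := gedl q (chi q a) (Ee q a 0) (Ee q a 1)

/-- `E_{nδ+α₀}` in `U⁺`. -/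
def E0v (q a : ℂ) : ℕ → Up q a := ged0 q (chi q a) (Ee q a 0) (Ee q a 1)


/-- Lemma 3.3: `E_{2δ} = ⟦E_{α₀}, E_{δ+α₁}⟧ = ⟦E_{δ+α₀}, E_{α₁}⟧` in `U⁺`. -/
theorem stmt_1 (q a : ℂ) (hq : q ≠ 0) (hqn : ∀ n : ℕ, 1 ≤ n → q ^ n ≠ 1) (ha : a ≠ 0) :
    Edlv q a 2 = gbr (chi q a) (1, 0) (1, 2) (Ee q a 0) (E1v q a 1) ∧
    Edlv q a 2 = gbr (chi q a) (2, 1) (0, 1) (E0v q a 1) (Ee q a 1) := by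
  constructor
  · rfl
  · show gedl q (chi q a) _ _ 2 = _
    simp only [Edlv, E0v, E1v, gedl, ged1, ged0, gbr, chi]
    norm_num
    simp only [smul_sub, smul_smul, mul_sub, sub_mul, smul_mul_assoc, mul_smul_comm,
      mul_assoc]
    match_scalars <;> ring

end TwoParamQA
end
end

section
/- For every integer n ≥ 1, the root vectors E_{nδ}, E_{nδ+α₀} and E_{nδ+α₁} are nonzero elements of U⁺. -/
noncomputable section
open scoped TensorProduct
namespace TwoParamQA

variable {A : Type} [Ring A] [Algebra ℂ A]

/-! ### Auxiliary constructions for the proof -/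

/-- Quantum-plane type operators on `ℤ →₀ ℂ`: `Mop t p r` acts by
`single k c ↦ t^(r*k) • single (k+p) c`. They satisfy
`Mop t p r * Mop t p' r' = t^(r*p') • Mop t (p+p') (r+r')`. -/
def Mop (t : ℂ) (p r : ℤ) : Module.End ℂ (ℤ →₀ ℂ) :=
  Finsupp.lsum ℂ fun k => t ^ (r * k) • Finsupp.lsingle (k + p)

lemma Mop_single (t : ℂ) (p r k : ℤ) (c : ℂ) :
    Mop t p r (Finsupp.single k c) = t ^ (r * k) • Finsupp.single (k + p) c := by
  rw [Mop, Finsupp.lsum_single]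
  simp

lemma Mop_mul (t : ℂ) (ht : t ≠ 0) (p r p' r' : ℤ) :
    Mop t p r * Mop t p' r' = t ^ (r * p') • Mop t (p + p') (r + r') := by
  apply Finsupp.lhom_ext
  intro k c
  simp only [Module.End.mul_apply, Mop_single, map_smul, LinearMap.smul_apply, smul_smul,
    ← zpow_add₀ ht]
  rw [show r' * k + r * (k + p') = r * p' + (r + r') * k by ring,
    show k + p' + p = k + (p + p') by ring]

lemma Mop_ne_zero (t : ℂ) (p r : ℤ) : Mop t p r ≠ 0 := by
  intro h
  have h2 := DFunLike.congr_fun h (Finsupp.single 0 1)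
  rw [Mop_single] at h2
  simp only [mul_zero, zpow_zero, one_smul, zero_add, LinearMap.zero_apply] at h2
  exact one_ne_zero (Finsupp.single_eq_zero.mp h2)

lemma chi_eval (q a : ℂ) (hq : q ≠ 0) (ha : a ≠ 0) (l1 l2 m1 m2 : ℤ) :
    chi q a (l1, l2) (m1, m2) =
      q ^ (2*l1*m1 - 4*l2*m1 + 2*l2*m2) * a ^ (l1*m2 - l2*m1) := by
  simp only [chi, mul_zpow, inv_zpow, ← zpow_neg, ← zpow_mul]
  rw [show 2*l1*m1 - 4*l2*m1 + 2*l2*m2 = 2*l1*m1 + (-4*(l2*m1) + 2*l2*m2) by ring,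
    show l1*m2 - l2*m1 = l1*m2 + -(l2*m1) by ring,
    zpow_add₀ hq, zpow_add₀ hq, zpow_add₀ ha]
  ring

lemma chi_10_01 (q a : ℂ) (hq : q ≠ 0) (ha : a ≠ 0) : chi q a (1,0) (0,1) = a := by
  rw [chi_eval q a hq ha]; norm_num

lemma chi_11 (q a : ℂ) (hq : q ≠ 0) (ha : a ≠ 0) (n : ℤ) :
    chi q a (1,1) (n, n+1) = q ^ 2 * a := by
  rw [chi_eval q a hq ha]
  rw [show 2*1*n - 4*1*n + 2*1*(n+1) = 2 by ring, show 1*(n+1) - 1*n = 1 by ring]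
  norm_num [zpow_ofNat]

lemma chi_11' (q a : ℂ) (hq : q ≠ 0) (ha : a ≠ 0) (n : ℤ) :
    chi q a (n+1, n) (1,1) = q ^ 2 * a := by
  rw [chi_eval q a hq ha]
  rw [show 2*(n+1)*1 - 4*n*1 + 2*n*1 = 2 by ring, show (n+1)*1 - n*1 = 1 by ring]
  norm_num [zpow_ofNat]

lemma chi_10_n (q a : ℂ) (hq : q ≠ 0) (ha : a ≠ 0) (n : ℤ) :
    chi q a (1,0) (n, n+1) = q ^ (2*n) * a ^ (n+1) := by
  rw [chi_eval q a hq ha]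
  norm_num

lemma serre_zero (q a t : ℂ) (hq : q ≠ 0) (ha : a ≠ 0) (ht : t ≠ 0)
    (htv : t = (q ^ 4)⁻¹ * a⁻¹) (i j : Fin 2) (hij : i ≠ j) :
    serreElt q (fun k => if k = 0 then Mop t 1 0 else Mop t 0 1)
      (qm q a) i j = 0 := by
  have h4 : q ^ 4 * a * t = 1 := by
    rw [htv, show q^4*a*((q^4)⁻¹*a⁻¹) = (q^4*(q^4)⁻¹) * (a*a⁻¹) by ring,
      mul_inv_cancel₀ (pow_ne_zero 4 hq), mul_inv_cancel₀ ha, one_mul]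
  have hq10 : (q:ℂ) ^ (-4:ℤ) * a⁻¹ = t := by
    rw [htv, zpow_neg]; norm_cast
  have hq10' : ((q:ℂ) ^ 4)⁻¹ * a⁻¹ = t := by
    rw [htv]
  fin_cases i <;> fin_cases j <;>
      first
      | exact absurd rfl hij
      | (simp [serreElt, qm, pow_succ, pow_zero, one_mul, hq10, hq10',
           Mop_mul _ ht, smul_mul_assoc, mul_smul_comm, smul_smul, Fin.ext_iff];
         norm_num [zpow_ofNat];
         match_scalars <;>
           (try simp only [hq10']) <;>
           first
           | ring1
           | linear_combination (-(1 - a * t) * (1 - q ^ 2 * a * t)) * h4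
           | (subst htv; field_simp; ring))

section maps
variable {A B : Type} [Ring A] [Algebra ℂ A] [Ring B] [Algebra ℂ B]
variable {F : Type} [FunLike F A B] [AlgHomClass F ℂ A B]

lemma map_serreElt (f : F) (q : ℂ) (X : Fin 2 → A) (c : Fin 2 → Fin 2 → ℂ)
    (i j : Fin 2) : f (serreElt q X c i j) = serreElt q (fun k => f (X k)) c i j := by
  simp [serreElt, map_sub, map_add, map_mul, map_pow, map_smul]

lemma map_gbr (f : F) (χ : ℤ × ℤ → ℤ × ℤ → ℂ) (l m : ℤ × ℤ) (X Y : A) :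
    f (gbr χ l m X Y) = gbr χ l m (f X) (f Y) := by
  simp [gbr, map_sub, map_mul, map_smul]

lemma map_ged1 (f : F) (q : ℂ) (χ : ℤ × ℤ → ℤ × ℤ → ℂ) (e0 e1 : A) (n : ℕ) :
    f (ged1 q χ e0 e1 n) = ged1 q χ (f e0) (f e1) n := by
  induction n with
  | zero => rfl
  | succ n ih => rw [ged1, ged1, map_smul, map_gbr, map_gbr, ih]

lemma map_gedl (f : F) (q : ℂ) (χ : ℤ × ℤ → ℤ × ℤ → ℂ) (e0 e1 : A) (n : ℕ) :
    f (gedl q χ e0 e1 (n+1)) = gedl q χ (f e0) (f e1) (n+1) := by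
  rw [gedl, gedl, map_gbr, map_ged1]

lemma map_ged0 (f : F) (q : ℂ) (χ : ℤ × ℤ → ℤ × ℤ → ℂ) (e0 e1 : A) (n : ℕ) :
    f (ged0 q χ e0 e1 n) = ged0 q χ (f e0) (f e1) n := by
  induction n with
  | zero => rfl
  | succ n ih => rw [ged0, ged0, map_smul, map_gbr, map_gbr, ih]

end maps

lemma Ed_eq (q a t : ℂ) (hq : q ≠ 0) (ha : a ≠ 0) (ht : t ≠ 0) :
    gbr (chi q a) (1,0) (0,1) (Mop t 1 0) (Mop t 0 1) = ((1:ℂ) - a*t) • Mop t 1 1 := by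
  rw [gbr, chi_10_01 q a hq ha, Mop_mul _ ht, Mop_mul _ ht]
  norm_num
  match_scalars
  ring

lemma key1 (q a t : ℂ) (hq : q ≠ 0) (ha : a ≠ 0) (ht : t ≠ 0)
    (h2 : qint q 2 ≠ 0) (h3 : (1:ℂ) - a*t ≠ 0) (h4 : (1:ℂ) - q^2*a*t ≠ 0) :
    ∀ m : ℕ, ∃ γ : ℂ, γ ≠ 0 ∧
      ged1 q (chi q a) (Mop t 1 0) (Mop t 0 1) m = γ • Mop t (m:ℤ) ((m:ℤ)+1) := by
  intro m
  induction m with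
  | zero => exact ⟨1, one_ne_zero, by simp [ged1]⟩
  | succ m ih =>
    obtain ⟨γ, hγ, hEq⟩ := ih
    refine ⟨(qint q 2)⁻¹ * (1 - a*t) * γ * t^(m:ℤ) * (1 - q^2*a*t),
      mul_ne_zero (mul_ne_zero (mul_ne_zero (mul_ne_zero (inv_ne_zero h2) h3) hγ)
        (zpow_ne_zero _ ht)) h4, ?_⟩
    rw [ged1, Ed_eq q a t hq ha ht, hEq, gbr, chi_11 q a hq ha]
    simp only [smul_mul_assoc, mul_smul_comm, Mop_mul _ ht, smul_smul,
      one_mul, mul_one, zpow_add_one₀ ht]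
    push_cast
    rw [show (1:ℤ) + (m:ℤ) = (m:ℤ) + 1 by ring,
      show (1:ℤ) + ((m:ℤ) + 1) = ((m:ℤ) + 1) + 1 by ring]
    match_scalars
    ring

lemma key0 (q a t : ℂ) (hq : q ≠ 0) (ha : a ≠ 0) (ht : t ≠ 0)
    (h2 : qint q 2 ≠ 0) (h3 : (1:ℂ) - a*t ≠ 0) (h4 : (1:ℂ) - q^2*a*t ≠ 0) :
    ∀ m : ℕ, ∃ γ : ℂ, γ ≠ 0 ∧
      ged0 q (chi q a) (Mop t 1 0) (Mop t 0 1) m = γ • Mop t ((m:ℤ)+1) (m:ℤ) := by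
  intro m
  induction m with
  | zero => exact ⟨1, one_ne_zero, by simp [ged0]⟩
  | succ m ih =>
    obtain ⟨γ, hγ, hEq⟩ := ih
    refine ⟨(qint q 2)⁻¹ * (1 - a*t) * γ * t^(m:ℤ) * (1 - q^2*a*t),
      mul_ne_zero (mul_ne_zero (mul_ne_zero (mul_ne_zero (inv_ne_zero h2) h3) hγ)
        (zpow_ne_zero _ ht)) h4, ?_⟩
    rw [ged0, Ed_eq q a t hq ha ht, hEq, gbr, chi_11' q a hq ha]
    simp only [smul_mul_assoc, mul_smul_comm, Mop_mul _ ht, smul_smul,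
      one_mul, mul_one, zpow_add_one₀ ht]
    push_cast
    rw [show (1:ℤ) + ((m:ℤ) + 1) = ((m:ℤ) + 1) + 1 by ring,
      show (1:ℤ) + (m:ℤ) = (m:ℤ) + 1 by ring]
    match_scalars
    ring

lemma chit (q a t : ℂ) (hq : q ≠ 0) (ha : a ≠ 0) (htq : t = q^(-4:ℤ)*a⁻¹) (m : ℤ) :
    chi q a (1,0) (m, m+1) * t^(m+1) = q ^ (-(2*m+4)) := by
  rw [chi_10_n q a hq ha, htq, mul_zpow, ← zpow_mul, inv_zpow, ← zpow_neg,
    show q^(2*m)*a^(m+1)*(q^(-4*(m+1)) * a^(-(m+1)))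
      = (q^(2*m)*q^(-4*(m+1)))*(a^(m+1)*a^(-(m+1))) by ring,
    ← zpow_add₀ hq, ← zpow_add₀ ha,
    show 2*m + -4*(m+1) = -(2*m+4) by ring, show (m+1) + -(m+1) = (0:ℤ) by ring,
    zpow_zero, mul_one]

lemma keyl (q a t : ℂ) (hq : q ≠ 0) (ha : a ≠ 0) (ht : t ≠ 0)
    (htq : t = q^(-4:ℤ)*a⁻¹) (hqn : ∀ n : ℕ, 1 ≤ n → q ^ n ≠ 1)
    (m : ℕ) (γ : ℂ) (hγ : γ ≠ 0)
    (hEq : ged1 q (chi q a) (Mop t 1 0) (Mop t 0 1) m = γ • Mop t (m:ℤ) ((m:ℤ)+1)) :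
    ∃ δ : ℂ, δ ≠ 0 ∧ gedl q (chi q a) (Mop t 1 0) (Mop t 0 1) (m+1)
      = δ • Mop t ((m:ℤ)+1) ((m:ℤ)+1) := by
  refine ⟨γ * (1 - q ^ (-(2*(m:ℤ)+4))), mul_ne_zero hγ ?_, ?_⟩
  · intro h
    have h1 : q ^ (-(2*(m:ℤ)+4)) = 1 := by linear_combination -h
    rw [zpow_neg, inv_eq_one] at h1
    have h2 : ((2*m+4 : ℕ) : ℤ) = 2*(m:ℤ)+4 := by push_cast; ring
    rw [← h2, zpow_natCast] at h1
    exact hqn (2*m+4) (by omega) h1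
  · rw [gedl, hEq, gbr]
    simp only [smul_mul_assoc, mul_smul_comm, Mop_mul _ ht, smul_smul, one_mul, mul_one,
      zero_mul, mul_zero, zpow_zero, zpow_one, add_zero, zero_add]
    rw [show (1:ℤ) + (m:ℤ) = (m:ℤ)+1 by ring]
    match_scalars
    linear_combination (-γ) * chit q a t hq ha htq (m:ℤ)

/-- Lemma 3.6(4): for every `n ≥ 1`, the root vectors `E_{nδ}`, `E_{nδ+α₀}` and
`E_{nδ+α₁}` are nonzero elements of `U⁺`. -/
theorem stmt_8 (q a : ℂ) (hq : q ≠ 0) (hqn : ∀ n : ℕ, 1 ≤ n → q ^ n ≠ 1) (ha : a ≠ 0) :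
    ∀ n : ℕ, 1 ≤ n →
      Edlv q a n ≠ 0 ∧ E0v q a n ≠ 0 ∧ E1v q a n ≠ 0 := by
  have hq2 : (1:ℂ) + q^2 ≠ 0 := by
    intro h
    apply hqn 4 (by norm_num)
    have h2 : q^2 = -1 := by linear_combination h
    calc q^4 = (q^2)^2 := by ring
    _ = 1 := by rw [h2]; ring
  have hqint : qint q 2 ≠ 0 := by
    have hnum : qnum (q^2) 2 = 1 + q^2 := by
      simp [qnum, Finset.sum_range_succ]
    rw [qint, hnum]
    exact mul_ne_zero (zpow_ne_zero _ hq) hq2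
  obtain ⟨t, htq⟩ : ∃ t : ℂ, t = q^(-4:ℤ)*a⁻¹ := ⟨_, rfl⟩
  have ht : t ≠ 0 := htq ▸ mul_ne_zero (zpow_ne_zero _ hq) (inv_ne_zero ha)
  have htv : t = (q^4)⁻¹ * a⁻¹ := by rw [htq, zpow_neg]; norm_cast
  have h3 : (1:ℂ) - a*t ≠ 0 := by
    rw [htv]; intro h
    apply hqn 4 (by norm_num)
    have e : a * ((q^4)⁻¹ * a⁻¹) = (q^4)⁻¹ := by field_simp; try ring
    rw [e] at h
    have h1 : ((q:ℂ)^4)⁻¹ = 1 := by linear_combination -h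
    rwa [inv_eq_one] at h1
  have h4 : (1:ℂ) - q^2*a*t ≠ 0 := by
    rw [htv]; intro h
    apply hqn 2 (by norm_num)
    have e : q^2*a*((q^4)⁻¹*a⁻¹) = ((q:ℂ)^2)⁻¹ := by field_simp; try ring
    rw [e] at h
    have h1 : ((q:ℂ)^2)⁻¹ = 1 := by linear_combination -h
    rwa [inv_eq_one] at h1
  set X : Fin 2 → Module.End ℂ (ℤ →₀ ℂ) :=
    (fun i => if i = 0 then Mop t 1 0 else Mop t 0 1) with hX
  set f : FreeAlgebra ℂ (Fin 2) →ₐ[ℂ] Module.End ℂ (ℤ →₀ ℂ) := FreeAlgebra.lift ℂ X with hf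
  have hrel : ∀ ⦃x y⦄, PRel q a x y → f x = f y := by
    rintro x y ⟨i, j, hij⟩
    have hsz := serre_zero q a t hq ha ht htv i j hij
    rw [map_zero]
    simp only [serreElt, map_sub, map_add, map_mul, map_pow, map_smul, hf,
      FreeAlgebra.lift_ι_apply, hX] at *
    exact hsz
  set Φ : Up q a →ₐ[ℂ] Module.End ℂ (ℤ →₀ ℂ) := RingQuot.liftAlgHom ℂ ⟨f, hrel⟩ with hΦ
  have hE : ∀ i, Φ (Ee q a i) = X i := by
    intro i
    rw [Ee, hΦ, RingQuot.liftAlgHom_mkAlgHom_apply, hf, FreeAlgebra.lift_ι_apply]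
  have hE0 : Φ (Ee q a 0) = Mop t 1 0 := by rw [hE 0]; rfl
  have hE1 : Φ (Ee q a 1) = Mop t 0 1 := by rw [hE 1]; rfl
  intro n hn
  obtain ⟨m, rfl⟩ : ∃ m, n = m + 1 := ⟨n - 1, by omega⟩
  obtain ⟨γ, hγ, hg1⟩ := key1 q a t hq ha ht hqint h3 h4 (m+1)
  obtain ⟨γ0, hγ0, hg0⟩ := key0 q a t hq ha ht hqint h3 h4 (m+1)
  obtain ⟨γm, hγm, hgm⟩ := key1 q a t hq ha ht hqint h3 h4 m
  obtain ⟨δ, hδ, hgl⟩ := keyl q a t hq ha ht htq hqn m γm hγm hgm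
  refine ⟨?_, ?_, ?_⟩
  · intro h0
    have hz : Φ (Edlv q a (m+1)) = 0 := by rw [h0, map_zero]
    rw [Edlv, map_gedl, hE0, hE1, hgl] at hz
    exact smul_ne_zero hδ (Mop_ne_zero t _ _) hz
  · intro h0
    have hz : Φ (E0v q a (m+1)) = 0 := by rw [h0, map_zero]
    rw [E0v, map_ged0, hE0, hE1, hg0] at hz
    exact smul_ne_zero hγ0 (Mop_ne_zero t _ _) hz
  · intro h0
    have hz : Φ (E1v q a (m+1)) = 0 := by rw [h0, map_zero]
    rw [E1v, map_ged1, hE0, hE1, hg1] at hz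
    exact smul_ne_zero hγ (Mop_ne_zero t _ _) hz

end TwoParamQA
end
end
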